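/- Stabilization of the contraction under tensoring with the identity: Let T : M_d → M_d be a quantum channel with peripheral projection T_φ, and let id denote the identity channel on M_{d'}. Then, with (T ⊗ id)_φ = T_φ ⊗ id, one has η_tr[T ⊗ id] = sup_{ρ ∈ S_{dd'}} d_tr((T ⊗ id)(ρ), (T_φ ⊗ id)(ρ)) ≤ 4d · η_tr[T]. -/

import Mathlib

open scoped Matrix ComplexOrder
open Matrix

section Defs

variable {m : Type*}

/-- The square root of a positive semidefinite matrix, as defined in Mathlib (Dec 2024). -/
noncomputable def Matrix.PosSemidef.sqrt {𝕜 : Type*} [RCLike 𝕜] {n : Type*} [Fintype n]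
    [DecidableEq n] {A : Matrix n n 𝕜} (hA : A.PosSemidef) : Matrix n n 𝕜 :=
  hA.1.eigenvectorUnitary.1 * diagonal ((↑) ∘ (√·) ∘ hA.1.eigenvalues) *
    (star hA.1.eigenvectorUnitary : Matrix n n 𝕜)

/-- The trace norm `‖X‖₁ = tr √(XᴴX)`. -/
noncomputable def traceNorm [Fintype m] [DecidableEq m] (X : Matrix m m ℂ) : ℝ :=
  ((Matrix.posSemidef_conjTranspose_mul_self X).sqrt.trace).re

/-- The trace distance `d_tr(ρ,σ) = ‖ρ - σ‖₁ / 2`. -/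
noncomputable def trDist [Fintype m] [DecidableEq m] (ρ σ : Matrix m m ℂ) : ℝ :=
  traceNorm (ρ - σ) / 2

/-- A density matrix: positive semidefinite (hence Hermitian) with unit trace. -/
def IsDensityMatrix [Fintype m] (ρ : Matrix m m ℂ) : Prop :=
  ρ.PosSemidef ∧ ρ.trace = 1

/-- Apply a superoperator, given by its matrix representation
(rows/columns indexed by matrix entry positions), to a matrix. -/
noncomputable def appS [Fintype m] (S : Matrix (m × m) (m × m) ℂ) (ρ : Matrix m m ℂ) :
    Matrix m m ℂ :=
  Matrix.of fun i j => ∑ p : m × m, S (i, j) p * ρ p.1 p.2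

/-- The Choi matrix of a superoperator. -/
def choiMatrix [Fintype m] (S : Matrix (m × m) (m × m) ℂ) : Matrix (m × m) (m × m) ℂ :=
  Matrix.of fun p q => S (p.2, q.2) (p.1, q.1)

/-- Quantum channel: completely positive (positive semidefinite Choi matrix)
and trace preserving. -/
def IsQChannelM [Fintype m] (S : Matrix (m × m) (m × m) ℂ) : Prop :=
  (choiMatrix S).PosSemidef ∧ ∀ X : Matrix m m ℂ, (appS S X).trace = X.trace

/-- `expS t L` is the superoperator `e^{tL}`. -/
noncomputable def expS [Fintype m] [DecidableEq m] (t : ℝ) (L : Matrix (m × m) (m × m) ℂ) :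
    Matrix (m × m) (m × m) ℂ :=
  NormedSpace.exp ((t : ℂ) • L)

/-- A Liouvillian: `e^{tL}` is a quantum channel for every `t ≥ 0`. -/
def IsLiouvillianM [Fintype m] [DecidableEq m] (L : Matrix (m × m) (m × m) ℂ) : Prop :=
  ∀ t : ℝ, 0 ≤ t → IsQChannelM (expS t L)

/-- `lam` is the spectral gap of the Liouvillian `L`:
`lam = inf {|Re μ| : μ eigenvalue of L, Re μ < 0}` (and such an eigenvalue exists). -/
def IsGapOf [Fintype m] [DecidableEq m] (L : Matrix (m × m) (m × m) ℂ) (lam : ℝ) : Prop :=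
  (∃ μ ∈ spectrum ℂ L, μ.re < 0) ∧
  lam = sInf {r : ℝ | ∃ μ ∈ spectrum ℂ L, μ.re < 0 ∧ r = -μ.re}

/-- `Tφ` is the peripheral evolution `T_{φ,t} = Σ_{k : Re λ_k = 0} e^{tλ_k} P_k` of the
semigroup generated by `L`: it acts as `e^{tμ}` on each generalized eigenspace of `L` with
`Re μ = 0`, and as `0` on each generalized eigenspace with `Re μ < 0`. -/
def IsPeriphEvolAt [Fintype m] (L : Matrix (m × m) (m × m) ℂ) (t : ℝ)
    (Tφ : Matrix (m × m) (m × m) ℂ) : Prop :=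
  (∀ μ : ℂ, μ.re = 0 → ∀ v ∈ Module.End.maxGenEigenspace (Matrix.mulVecLin L) μ,
      Tφ.mulVec v = Complex.exp (t * μ) • v) ∧
  (∀ μ : ℂ, μ.re < 0 → ∀ v ∈ Module.End.maxGenEigenspace (Matrix.mulVecLin L) μ,
      Tφ.mulVec v = 0)

/-- `Tφ` is the peripheral projection `T_φ = Σ_{k : |μ_k| = 1} μ_k P_k` of the channel `T`:
it acts as `μ •` on each generalized eigenspace of `T` with `|μ| = 1`, and as `0` on each
generalized eigenspace with `|μ| < 1`. -/
def IsPeriphProjM [Fintype m] (T Tφ : Matrix (m × m) (m × m) ℂ) : Prop :=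
  (∀ μ : ℂ, ‖μ‖ = 1 → ∀ v ∈ Module.End.maxGenEigenspace (Matrix.mulVecLin T) μ,
      Tφ.mulVec v = μ • v) ∧
  (∀ μ : ℂ, ‖μ‖ < 1 → ∀ v ∈ Module.End.maxGenEigenspace (Matrix.mulVecLin T) μ,
      Tφ.mulVec v = 0)

/-- The trace-norm contraction `η_tr[T] = sup_ρ d_tr(T(ρ), Tφ(ρ))` over density matrices. -/
noncomputable def etaTR [Fintype m] [DecidableEq m] (T Tφ : Matrix (m × m) (m × m) ℂ) : ℝ :=
  ⨆ ρ : {ρ : Matrix m m ℂ // IsDensityMatrix ρ}, trDist (appS T ρ.1) (appS Tφ ρ.1)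

open scoped Classical in
/-- Matrix square root of a positive semidefinite matrix (junk value `0` otherwise). -/
noncomputable def msqrt [Fintype m] [DecidableEq m] (A : Matrix m m ℂ) : Matrix m m ℂ :=
  if h : A.PosSemidef then h.sqrt else 0

/-- The fidelity `F(ρ,σ) = tr √(√ρ σ √ρ)`. -/
noncomputable def fidelity [Fintype m] [DecidableEq m] (ρ σ : Matrix m m ℂ) : ℝ :=
  ((msqrt (msqrt ρ * σ * msqrt ρ)).trace).re

/-- The Bures distance `d_B(ρ,σ) = √(1 - F(ρ,σ))`. -/
noncomputable def buresDist [Fintype m] [DecidableEq m] (ρ σ : Matrix m m ℂ) : ℝ :=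
  Real.sqrt (1 - fidelity ρ σ)

/-- The Frobenius (Hilbert-Schmidt) norm `‖X‖₂ = √(tr XᴴX)`. -/
noncomputable def frobNorm [Fintype m] (X : Matrix m m ℂ) : ℝ :=
  Real.sqrt ((Xᴴ * X).trace.re)

/-- The operator (spectral) norm `‖A‖_∞`. -/
noncomputable def specNorm [Fintype m] [DecidableEq m] (A : Matrix m m ℂ) : ℝ :=
  ‖(Matrix.toEuclideanLin A).toContinuousLinearMap‖

/-- The superoperator norm `‖S‖_{2→2} = sup {‖S(X)‖₂ : ‖X‖₂ ≤ 1}` induced by the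
Frobenius norm. -/
noncomputable def superNorm22 [Fintype m] (S : Matrix (m × m) (m × m) ℂ) : ℝ :=
  ⨆ X : {X : Matrix m m ℂ // frobNorm X ≤ 1}, frobNorm (appS S X.1)

/-- The dual (Heisenberg-picture) superoperator `S*`, satisfying
`tr[A S*(B)] = tr[S(A) B]`. -/
def dualS [Fintype m] (S : Matrix (m × m) (m × m) ℂ) : Matrix (m × m) (m × m) ℂ :=
  Matrix.of fun p q => S (q.2, q.1) (p.2, p.1)

/-- Matrix representation of the superoperator `ρ ↦ A ρ B`. -/
def sandwichS [Fintype m] (A B : Matrix m m ℂ) : Matrix (m × m) (m × m) ℂ :=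
  Matrix.of fun p q => A p.1 q.1 * B q.2 p.2

/-- The Lindblad dissipator `ρ ↦ L ρ L† − (1/2)L†L ρ − (1/2)ρ L†L` in matrix
representation. -/
noncomputable def lindbladTermS [Fintype m] [DecidableEq m] (L : Matrix m m ℂ) :
    Matrix (m × m) (m × m) ℂ :=
  sandwichS L Lᴴ - (1 / 2 : ℂ) • sandwichS (Lᴴ * L) 1 - (1 / 2 : ℂ) • sandwichS 1 (Lᴴ * L)

/-- Tensor (Kronecker) product of two superoperators. -/
def kronS {m' : Type*} [Fintype m] [Fintype m'] (S : Matrix (m × m) (m × m) ℂ)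
    (S' : Matrix (m' × m') (m' × m') ℂ) :
    Matrix ((m × m') × (m × m')) ((m × m') × (m × m')) ℂ :=
  Matrix.of fun p q =>
    S (p.1.1, p.2.1) (q.1.1, q.2.1) * S' (p.1.2, p.2.2) (q.1.2, q.2.2)

end Defs

/-- `n`-fold tensor power `S^{⊗n}` of a superoperator on `M_d`. -/
noncomputable def tensorPowS (n : ℕ) {d : ℕ} (S : Matrix (Fin d × Fin d) (Fin d × Fin d) ℂ) :
    Matrix ((Fin n → Fin d) × (Fin n → Fin d)) ((Fin n → Fin d) × (Fin n → Fin d)) ℂ :=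
  Matrix.of fun p q => ∏ i, S (p.1 i, p.2 i) (q.1 i, q.2 i)

/-- `n`-fold tensor power `ρ^{⊗n}` of a matrix. -/
noncomputable def tensorPowM (n : ℕ) {d : ℕ} (ρ : Matrix (Fin d) (Fin d) ℂ) :
    Matrix (Fin n → Fin d) (Fin n → Fin d) ℂ :=
  Matrix.of fun x y => ∏ i, ρ (x i) (y i)

/-- Tensor product `A 0 ⊗ A 1 ⊗ … ⊗ A (n-1)` of a family of matrices. -/
noncomputable def tensorFamilyM {n d : ℕ} (A : Fin n → Matrix (Fin d) (Fin d) ℂ) :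
    Matrix (Fin n → Fin d) (Fin n → Fin d) ℂ :=
  Matrix.of fun x y => ∏ i, A i (x i) (y i)

section Compat
open scoped MatrixOrder
variable {n : Type*} [Fintype n] [DecidableEq n]

lemma Matrix.PosSemidef.sqrt_eq_cfc' {A : Matrix n n ℂ} (hA : A.PosSemidef) :
    hA.sqrt = CFC.sqrt A := by
  rw [CFC.sqrt_eq_cfc, cfc_nnreal_eq_real _ A, hA.1.cfc_eq, Matrix.IsHermitian.cfc,
    Unitary.conjStarAlgAut_apply, Matrix.PosSemidef.sqrt]
  congr 3
  funext i
  simp [hA.eigenvalues_nonneg i]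

lemma Matrix.PosSemidef.posSemidef_sqrt {A : Matrix n n ℂ} (hA : A.PosSemidef) :
    hA.sqrt.PosSemidef := by
  rw [hA.sqrt_eq_cfc']
  exact (CFC.sqrt_nonneg A).posSemidef

lemma Matrix.PosSemidef.sqrt_mul_self {A : Matrix n n ℂ} (hA : A.PosSemidef) :
    hA.sqrt * hA.sqrt = A := by
  rw [hA.sqrt_eq_cfc']
  exact CFC.sqrt_mul_sqrt_self A hA.nonneg

lemma Matrix.PosSemidef.sq_sqrt {A : Matrix n n ℂ} (hA : A.PosSemidef) :
    hA.sqrt ^ 2 = A := by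
  rw [sq, hA.sqrt_mul_self]

lemma Matrix.PosSemidef.eq_sqrt_of_sq_eq {A B : Matrix n n ℂ} (hA : A.PosSemidef)
    (hB : B.PosSemidef) (hAB : A ^ 2 = B) : A = hB.sqrt := by
  rw [hB.sqrt_eq_cfc']
  exact (CFC.sqrt_unique (by rw [← sq]; exact hAB) hA.nonneg).symm

lemma Matrix.posSemidef_iff_eq_transpose_mul_self {A : Matrix n n ℂ} :
    A.PosSemidef ↔ ∃ B : Matrix n n ℂ, A = Bᴴ * B := by
  rw [← Matrix.nonneg_iff_posSemidef, CStarAlgebra.nonneg_iff_eq_star_mul_self]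
  rfl

end Compat

namespace ContractionAux

section TN

variable {n : Type*} [Fintype n] [DecidableEq n]


variable {n : Type*} [Fintype n] [DecidableEq n]

lemma cs_dot (a b : n → ℂ) :
    ‖star a ⬝ᵥ b‖ ≤
      Real.sqrt ((star a ⬝ᵥ a).re) * Real.sqrt ((star b ⬝ᵥ b).re) := by
  have h1 := EuclideanSpace.inner_toLp_toLp (𝕜 := ℂ) a b
  have h2 := norm_inner_le_norm (𝕜 := ℂ) (WithLp.toLp 2 a)
    (WithLp.toLp 2 b)
  have ha : Real.sqrt ((star a ⬝ᵥ a).re) = ‖WithLp.toLp 2 a‖ := by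
    rw [dotProduct_comm, ← EuclideanSpace.inner_toLp_toLp (𝕜 := ℂ) a a]
    have := inner_self_eq_norm_sq (𝕜 := ℂ) (WithLp.toLp 2 a)
    rw [show (RCLike.re (inner ℂ (WithLp.toLp 2 a)
      (WithLp.toLp 2 a) : ℂ)) = (inner ℂ (WithLp.toLp 2 a)
      (WithLp.toLp 2 a) : ℂ).re from rfl] at this
    rw [this, Real.sqrt_sq (norm_nonneg _)]
  have hb : Real.sqrt ((star b ⬝ᵥ b).re) = ‖WithLp.toLp 2 b‖ := by
    rw [dotProduct_comm, ← EuclideanSpace.inner_toLp_toLp (𝕜 := ℂ) b b]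
    have := inner_self_eq_norm_sq (𝕜 := ℂ) (WithLp.toLp 2 b)
    rw [show (RCLike.re (inner ℂ (WithLp.toLp 2 b)
      (WithLp.toLp 2 b) : ℂ)) = (inner ℂ (WithLp.toLp 2 b)
      (WithLp.toLp 2 b) : ℂ).re from rfl] at this
    rw [this, Real.sqrt_sq (norm_nonneg _)]
  rw [ha, hb, dotProduct_comm, ← h1]
  simpa using h2

lemma dot_mulVec_self (M : Matrix n n ℂ) (x : n → ℂ) :
    star (M *ᵥ x) ⬝ᵥ (M *ᵥ x) = star x ⬝ᵥ ((Mᴴ * M) *ᵥ x) := by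
  rw [star_mulVec, dotProduct_mulVec, dotProduct_mulVec, ← Matrix.vecMul_vecMul]




variable {n : Type*} [Fintype n] [DecidableEq n]



lemma psd_trace_nonneg {A : Matrix n n ℂ} (hA : A.PosSemidef) :
    0 ≤ A.trace ∧ A.trace.im = 0 := by
  have h : ∀ i, 0 ≤ A i i := by
    intro i
    have h2 := hA.dotProduct_mulVec_nonneg (Pi.single i 1)
    have e : star (Pi.single i 1 : n → ℂ) ⬝ᵥ A *ᵥ Pi.single i 1 = A i i := by
      simp [Matrix.mulVec_single, dotProduct, Pi.star_apply, Pi.single_apply, apply_ite,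
        Finset.sum_ite_eq', mul_comm]
    rwa [e] at h2
  have h3 : 0 ≤ A.trace := Finset.sum_nonneg fun i _ => h i
  exact ⟨h3, ((Complex.nonneg_iff.mp h3).2).symm⟩

section specA

variable (A : Matrix n n ℂ)

lemma hUU' : ((posSemidef_conjTranspose_mul_self A).1.eigenvectorUnitary : Matrix n n ℂ) *
    ((posSemidef_conjTranspose_mul_self A).1.eigenvectorUnitary : Matrix n n ℂ)ᴴ = 1 := by
  have := (posSemidef_conjTranspose_mul_self A).1.eigenvectorUnitary.2
  rw [Matrix.mem_unitaryGroup_iff] at this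
  simpa [Matrix.star_eq_conjTranspose] using this

lemma hUU : ((posSemidef_conjTranspose_mul_self A).1.eigenvectorUnitary : Matrix n n ℂ)ᴴ *
    ((posSemidef_conjTranspose_mul_self A).1.eigenvectorUnitary : Matrix n n ℂ) = 1 := by
  have := (posSemidef_conjTranspose_mul_self A).1.eigenvectorUnitary.2
  rw [Matrix.mem_unitaryGroup_iff'] at this
  simpa [Matrix.star_eq_conjTranspose] using this

lemma hBB : (A * ((posSemidef_conjTranspose_mul_self A).1.eigenvectorUnitary : Matrix n n ℂ))ᴴ *
    (A * ((posSemidef_conjTranspose_mul_self A).1.eigenvectorUnitary : Matrix n n ℂ)) =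
    diagonal (RCLike.ofReal ∘ (posSemidef_conjTranspose_mul_self A).1.eigenvalues) := by
  have hspec := (posSemidef_conjTranspose_mul_self A).1.spectral_theorem
  rw [Unitary.conjStarAlgAut_apply, Matrix.star_eq_conjTranspose] at hspec
  set U : Matrix n n ℂ :=
    ((posSemidef_conjTranspose_mul_self A).1.eigenvectorUnitary : Matrix n n ℂ) with hU
  set D : Matrix n n ℂ :=
    diagonal (RCLike.ofReal ∘ (posSemidef_conjTranspose_mul_self A).1.eigenvalues) with hD
  calc (A * U)ᴴ * (A * U) = Uᴴ * (Aᴴ * A) * U := by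
        rw [Matrix.conjTranspose_mul]; simp only [Matrix.mul_assoc]
    _ = Uᴴ * (U * D * Uᴴ) * U := by rw [← hspec]
    _ = (Uᴴ * U) * D * (Uᴴ * U) := by simp only [Matrix.mul_assoc]
    _ = D := by rw [hUU]; simp

lemma traceNorm_eq_sum :
    traceNorm A = ∑ i, Real.sqrt ((posSemidef_conjTranspose_mul_self A).1.eigenvalues i) := by
  rw [traceNorm, Matrix.PosSemidef.sqrt]
  rw [Matrix.trace_mul_cycle]
  rw [Unitary.coe_star_mul_self (posSemidef_conjTranspose_mul_self A).1.eigenvectorUnitary]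
  rw [Matrix.one_mul, Matrix.trace_diagonal]
  simp

lemma dual_le (Z : Matrix n n ℂ)
    (hZ : ∀ x : n → ℂ, (star (Z *ᵥ x) ⬝ᵥ (Z *ᵥ x)).re ≤ (star x ⬝ᵥ x).re) :
    ((Zᴴ * A).trace).re ≤ traceNorm A := by
  set U : Matrix n n ℂ :=
    ((posSemidef_conjTranspose_mul_self A).1.eigenvectorUnitary : Matrix n n ℂ) with hU
  set lam := (posSemidef_conjTranspose_mul_self A).1.eigenvalues with hlam
  set B := A * U with hB
  set C := Z * U with hC
  have hBBd : Bᴴ * B = diagonal (RCLike.ofReal ∘ lam) := hBB A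
  have htr : (Zᴴ * A).trace = (Cᴴ * B).trace := by
    have h1 : Cᴴ * B = Uᴴ * (Zᴴ * A) * U := by
      rw [hC, hB, Matrix.conjTranspose_mul]; simp only [Matrix.mul_assoc]
    rw [h1, Matrix.trace_mul_cycle, ← Matrix.mul_assoc, hUU', Matrix.one_mul]
  have hterm : ∀ i, ‖(Cᴴ * B) i i‖ ≤ Real.sqrt (lam i) := by
    intro i
    have hcb : (Cᴴ * B) i i = star (fun k => C k i) ⬝ᵥ (fun k => B k i) := by
      simp [Matrix.mul_apply, Matrix.conjTranspose_apply, dotProduct]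
    have hbb : (star (fun k => B k i) ⬝ᵥ (fun k => B k i)) = ((lam i : ℝ) : ℂ) := by
      have e : star (fun k => B k i) ⬝ᵥ (fun k => B k i) = (Bᴴ * B) i i := by
        simp [Matrix.mul_apply, Matrix.conjTranspose_apply, dotProduct]
      rw [e, hBBd]
      simp [Matrix.diagonal_apply_eq]
    have hcc : ((star (fun k => C k i) ⬝ᵥ (fun k => C k i)).re) ≤ 1 := by
      have e1 : (fun k => C k i) = Z *ᵥ (fun k => U k i) := by
        ext k; simp [hC, Matrix.mul_apply, Matrix.mulVec, dotProduct]
      have e2 : (star (fun k => U k i) ⬝ᵥ (fun k => U k i)) = (Uᴴ * U) i i := by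
        simp [Matrix.mul_apply, Matrix.conjTranspose_apply, dotProduct]
      have e3 : ((star (fun k => U k i) ⬝ᵥ (fun k => U k i)).re) = 1 := by
        rw [e2, hUU]; simp
      rw [e1]
      exact (hZ (fun k => U k i)).trans (le_of_eq e3)
    rw [hcb]
    refine (cs_dot _ _).trans ?_
    have h2 : Real.sqrt ((star (fun k => B k i) ⬝ᵥ (fun k => B k i)).re)
        = Real.sqrt (lam i) := by rw [hbb]; simp
    have h3 : Real.sqrt ((star (fun k => C k i) ⬝ᵥ (fun k => C k i)).re) ≤ 1 :=
      Real.sqrt_le_one.mpr hcc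
    rw [h2]
    calc _ ≤ 1 * Real.sqrt (lam i) := by
          refine mul_le_mul_of_nonneg_right h3 (Real.sqrt_nonneg _)
      _ = Real.sqrt (lam i) := one_mul _
  calc ((Zᴴ * A).trace).re ≤ ‖(Zᴴ * A).trace‖ := Complex.re_le_norm _
    _ = ‖(Cᴴ * B).trace‖ := by rw [htr]
    _ ≤ ∑ i, ‖(Cᴴ * B) i i‖ := by
        rw [Matrix.trace]; exact norm_sum_le _ _
    _ ≤ ∑ i, Real.sqrt (lam i) := Finset.sum_le_sum fun i _ => hterm i
    _ = traceNorm A := (traceNorm_eq_sum A).symm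

lemma exists_dual : ∃ Z : Matrix n n ℂ,
    (∀ x : n → ℂ, (star (Z *ᵥ x) ⬝ᵥ (Z *ᵥ x)).re ≤ (star x ⬝ᵥ x).re) ∧
    (Zᴴ * A).trace = ((traceNorm A : ℝ) : ℂ) := by
  set U : Matrix n n ℂ :=
    ((posSemidef_conjTranspose_mul_self A).1.eigenvectorUnitary : Matrix n n ℂ) with hU
  set lam := (posSemidef_conjTranspose_mul_self A).1.eigenvalues with hlam
  have hlamnn : ∀ i, 0 ≤ lam i :=
    fun i => (posSemidef_conjTranspose_mul_self A).eigenvalues_nonneg i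
  set B := A * U with hB
  have hBBd : Bᴴ * B = diagonal (RCLike.ofReal ∘ lam) := hBB A
  have hBBe : ∀ i j, (∑ k, (starRingEnd ℂ) (B k i) * B k j)
      = if i = j then ((lam i : ℝ) : ℂ) else 0 := by
    intro i j
    have e : (∑ k, (starRingEnd ℂ) (B k i) * B k j) = (Bᴴ * B) i j := by
      simp [Matrix.mul_apply, Matrix.conjTranspose_apply]
    rw [e, hBBd]
    by_cases h : i = j <;> simp [h, Matrix.diagonal_apply, RCLike.ofReal]
  set V : Matrix n n ℂ := Matrix.of
    (fun k i => if lam i = 0 then 0 else B k i / ((Real.sqrt (lam i) : ℝ) : ℂ)) with hV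
  have hVV : Vᴴ * V = diagonal (fun i => if lam i = 0 then (0 : ℂ) else 1) := by
    ext i j
    have e : (Vᴴ * V) i j = ∑ k, (starRingEnd ℂ) (V k i) * V k j := by
      simp [Matrix.mul_apply, Matrix.conjTranspose_apply]
    rw [e, Matrix.diagonal_apply]
    by_cases h : i = j
    · subst h; rw [if_pos rfl]
      by_cases hi : lam i = 0
      · rw [if_pos hi]
        exact Finset.sum_eq_zero fun k _ => by simp [hV, hi]
      · rw [if_neg hi]
        have key : ∀ k, (starRingEnd ℂ) (V k i) * V k i
            = ((starRingEnd ℂ) (B k i) * B k i) /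
              (((Real.sqrt (lam i) : ℝ) : ℂ) * ((Real.sqrt (lam i) : ℝ) : ℂ)) := by
          intro k
          simp only [hV, Matrix.of_apply, hi, if_false, map_div₀, Complex.conj_ofReal]
          ring
        rw [Finset.sum_congr rfl (fun k _ => key k), ← Finset.sum_div, hBBe i i, if_pos rfl,
          ← Complex.ofReal_mul, Real.mul_self_sqrt (hlamnn i)]
        exact div_self (Complex.ofReal_ne_zero.mpr hi)
    · rw [if_neg h]
      by_cases hi : lam i = 0
      · exact Finset.sum_eq_zero fun k _ => by simp [hV, hi]
      · by_cases hj : lam j = 0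
        · exact Finset.sum_eq_zero fun k _ => by simp [hV, hj]
        · have key : ∀ k, (starRingEnd ℂ) (V k i) * V k j
              = ((starRingEnd ℂ) (B k i) * B k j) /
                (((Real.sqrt (lam i) : ℝ) : ℂ) * ((Real.sqrt (lam j) : ℝ) : ℂ)) := by
            intro k
            simp only [hV, Matrix.of_apply, hi, hj, if_false, map_div₀, Complex.conj_ofReal]
            ring
          rw [Finset.sum_congr rfl (fun k _ => key k), ← Finset.sum_div, hBBe i j, if_neg h,
            zero_div]
  refine ⟨V * Uᴴ, ?_, ?_⟩
  · intro x
    have e1 : (V * Uᴴ) *ᵥ x = V *ᵥ (Uᴴ *ᵥ x) := (Matrix.mulVec_mulVec _ _ _).symm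
    set y := Uᴴ *ᵥ x with hy
    have e2 : star (V *ᵥ y) ⬝ᵥ (V *ᵥ y) = star y ⬝ᵥ ((Vᴴ * V) *ᵥ y) := dot_mulVec_self V y
    have e3 : star y ⬝ᵥ y = star x ⬝ᵥ x := by
      have e4 := dot_mulVec_self Uᴴ x
      rw [Matrix.conjTranspose_conjTranspose, hUU', Matrix.one_mulVec] at e4
      rw [hy, e4]
    rw [e1, e2, hVV, ← e3]
    rw [dotProduct, dotProduct, Complex.re_sum, Complex.re_sum]
    refine Finset.sum_le_sum fun i _ => ?_
    rw [Matrix.mulVec_diagonal]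
    by_cases hi : lam i = 0
    · rw [if_pos hi, zero_mul, mul_zero]
      have e5 : ((star y) i * y i) = ((Complex.normSq (y i) : ℝ) : ℂ) := by
        rw [show (star y) i = (starRingEnd ℂ) (y i) from rfl,
          ← Complex.normSq_eq_conj_mul_self]
      rw [e5]
      simpa using Complex.normSq_nonneg (y i)
    · rw [if_neg hi, one_mul]
  · have htr : ((V * Uᴴ)ᴴ * A).trace = (Vᴴ * B).trace := by
      rw [Matrix.conjTranspose_mul, Matrix.conjTranspose_conjTranspose, Matrix.mul_assoc,
        Matrix.trace_mul_comm, Matrix.mul_assoc]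
    rw [htr]
    have hterm : ∀ i, (Vᴴ * B) i i = ((Real.sqrt (lam i) : ℝ) : ℂ) := by
      intro i
      have e : (Vᴴ * B) i i = ∑ k, (starRingEnd ℂ) (V k i) * B k i := by
        simp [Matrix.mul_apply, Matrix.conjTranspose_apply]
      rw [e]
      by_cases hi : lam i = 0
      · rw [show Real.sqrt (lam i) = 0 by rw [hi, Real.sqrt_zero]]
        exact (Finset.sum_eq_zero fun k _ => by simp [hV, hi]).trans (by simp)
      · have key : ∀ k, (starRingEnd ℂ) (V k i) * B k i
            = ((starRingEnd ℂ) (B k i) * B k i) / ((Real.sqrt (lam i) : ℝ) : ℂ) := by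
          intro k
          simp only [hV, Matrix.of_apply, hi, if_false, map_div₀, Complex.conj_ofReal]
          ring
        rw [Finset.sum_congr rfl (fun k _ => key k), ← Finset.sum_div, hBBe i i, if_pos rfl,
          ← Complex.ofReal_div, Real.div_sqrt]
    rw [traceNorm_eq_sum A]
    have : (Vᴴ * B).trace = ∑ i, ((Real.sqrt (lam i) : ℝ) : ℂ) := by
      rw [Matrix.trace]
      exact Finset.sum_congr rfl fun i _ => hterm i
    rw [this]
    norm_cast

end specA

lemma traceNorm_psd {A : Matrix n n ℂ} (hA : A.PosSemidef) : traceNorm A = A.trace.re := by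
  have h : A ^ 2 = Aᴴ * A := by rw [pow_two, hA.1.eq]
  rw [traceNorm, ← hA.eq_sqrt_of_sq_eq (posSemidef_conjTranspose_mul_self A) h]

lemma traceNorm_triangle (A B : Matrix n n ℂ) :
    traceNorm (A + B) ≤ traceNorm A + traceNorm B := by
  obtain ⟨Z, hZ, htr⟩ := exists_dual (A + B)
  have h0 : traceNorm (A + B) = ((Zᴴ * (A + B)).trace).re := by rw [htr]; simp
  rw [h0, Matrix.mul_add, Matrix.trace_add, Complex.add_re]
  exact add_le_add (dual_le A Z hZ) (dual_le B Z hZ)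

lemma traceNorm_zero : traceNorm (0 : Matrix n n ℂ) = 0 := by
  rw [traceNorm_psd Matrix.PosSemidef.zero, Matrix.trace_zero, Complex.zero_re]

lemma traceNorm_sum_le {ι : Type*} (s : Finset ι) (f : ι → Matrix n n ℂ) :
    traceNorm (∑ i ∈ s, f i) ≤ ∑ i ∈ s, traceNorm (f i) := by
  classical
  induction s using Finset.induction_on with
  | empty => simp [traceNorm_zero]
  | insert _ _ hx ih =>
      rw [Finset.sum_insert hx, Finset.sum_insert hx]
      exact (traceNorm_triangle _ _).trans (by linarith)

open Kronecker in
lemma kron_conjTranspose {m' : Type*} [Fintype m']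
    (X : Matrix n n ℂ) (Y : Matrix m' m' ℂ) : (X ⊗ₖ Y)ᴴ = Xᴴ ⊗ₖ Yᴴ := by
  ext ⟨a, b⟩ ⟨c, d⟩
  simp [Matrix.conjTranspose_apply, Matrix.kroneckerMap_apply, star_mul', mul_comm]

open Kronecker in
lemma kron_posSemidef {m' : Type*} [Fintype m'] [DecidableEq m']
    {P : Matrix n n ℂ} {Q : Matrix m' m' ℂ} (hP : P.PosSemidef) (hQ : Q.PosSemidef) :
    (P ⊗ₖ Q).PosSemidef := by
  obtain ⟨C, rfl⟩ := Matrix.posSemidef_iff_eq_transpose_mul_self.mp hP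
  obtain ⟨D, rfl⟩ := Matrix.posSemidef_iff_eq_transpose_mul_self.mp hQ
  rw [Matrix.mul_kronecker_mul, ← kron_conjTranspose]
  exact Matrix.posSemidef_conjTranspose_mul_self _

open Kronecker in
lemma traceNorm_kron {m' : Type*} [Fintype m'] [DecidableEq m']
    (A : Matrix n n ℂ) (B : Matrix m' m' ℂ) :
    traceNorm (A ⊗ₖ B) = traceNorm A * traceNorm B := by
  have hA := Matrix.posSemidef_conjTranspose_mul_self A
  have hB := Matrix.posSemidef_conjTranspose_mul_self B
  have hker : (hA.sqrt ⊗ₖ hB.sqrt).PosSemidef :=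
    kron_posSemidef hA.posSemidef_sqrt hB.posSemidef_sqrt
  have hsq : (hA.sqrt ⊗ₖ hB.sqrt) ^ 2 = (A ⊗ₖ B)ᴴ * (A ⊗ₖ B) := by
    rw [pow_two, ← Matrix.mul_kronecker_mul, hA.sqrt_mul_self, hB.sqrt_mul_self,
      kron_conjTranspose, ← Matrix.mul_kronecker_mul]
  have h := hker.eq_sqrt_of_sq_eq (Matrix.posSemidef_conjTranspose_mul_self (A ⊗ₖ B)) hsq
  rw [traceNorm, ← h, Matrix.trace_kronecker, Complex.mul_re]
  have h1 := psd_trace_nonneg hA.posSemidef_sqrt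
  have h2 := psd_trace_nonneg hB.posSemidef_sqrt
  rw [h1.2, h2.2, mul_zero, sub_zero]
  rfl



lemma traceNorm_nonneg (X : Matrix n n ℂ) : 0 ≤ traceNorm X := by
  have := psd_trace_nonneg (Matrix.posSemidef_conjTranspose_mul_self X).posSemidef_sqrt
  exact (Complex.nonneg_iff.mp this.1).1

/-- If `P` is PSD with `P^2 = XᴴX` then `traceNorm X = re (tr P)`. -/
lemma traceNorm_eq_of_sq {X P : Matrix n n ℂ} (hP : P.PosSemidef)
    (h : P ^ 2 = Xᴴ * X) : traceNorm X = P.trace.re := by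
  have := hP.eq_sqrt_of_sq_eq (Matrix.posSemidef_conjTranspose_mul_self X) h
  rw [traceNorm, ← this]


lemma posSemidef_smul {A : Matrix n n ℂ} (hA : A.PosSemidef) (c : ℝ) (hc : 0 ≤ c) :
    ((c : ℂ) • A).PosSemidef := by
  refine Matrix.PosSemidef.of_dotProduct_mulVec_nonneg ?_ ?_
  · unfold Matrix.IsHermitian
    rw [Matrix.conjTranspose_smul, hA.1.eq]
    congr 1
    simp
  · intro x
    rw [Matrix.smul_mulVec, dotProduct_smul]
    exact smul_nonneg (by exact_mod_cast Complex.zero_le_real.mpr hc) (hA.dotProduct_mulVec_nonneg x)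

lemma traceNorm_smul (c : ℂ) (A : Matrix n n ℂ) :
    traceNorm (c • A) = ‖c‖ * traceNorm A := by
  have hP := (Matrix.posSemidef_conjTranspose_mul_self A).posSemidef_sqrt
  have habs : ((‖c‖ : ℂ)) • (Matrix.posSemidef_conjTranspose_mul_self A).sqrt
      |>.PosSemidef := posSemidef_smul hP _ (norm_nonneg c)
  have hsq : (((‖c‖ : ℂ)) • (Matrix.posSemidef_conjTranspose_mul_self A).sqrt) ^ 2
      = (c • A)ᴴ * (c • A) := by
    rw [smul_pow, (Matrix.posSemidef_conjTranspose_mul_self A).sq_sqrt]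
    rw [Matrix.conjTranspose_smul, Matrix.mul_smul, Matrix.smul_mul, smul_smul]
    congr 1
    rw [← Complex.ofReal_pow, Complex.sq_norm, Complex.normSq_eq_conj_mul_self, mul_comm]
    rfl
  rw [traceNorm_eq_of_sq habs hsq, Matrix.trace_smul, traceNorm]
  simp


end TN

section Problem

open Kronecker

variable {m m' : Type*} [Fintype m] [Fintype m'] [DecidableEq m] [DecidableEq m']

lemma appS_subS (S₁ S₂ : Matrix (m × m) (m × m) ℂ) (ρ : Matrix m m ℂ) :
    appS (S₁ - S₂) ρ = appS S₁ ρ - appS S₂ ρ := by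
  ext i j
  simp [appS, sub_mul, Finset.sum_sub_distrib]

lemma appS_addM (S : Matrix (m × m) (m × m) ℂ) (ρ σ : Matrix m m ℂ) :
    appS S (ρ + σ) = appS S ρ + appS S σ := by
  ext i j
  simp [appS, mul_add, Finset.sum_add_distrib]

lemma appS_subM (S : Matrix (m × m) (m × m) ℂ) (ρ σ : Matrix m m ℂ) :
    appS S (ρ - σ) = appS S ρ - appS S σ := by
  ext i j
  simp [appS, mul_sub, Finset.sum_sub_distrib]

lemma appS_smulM (S : Matrix (m × m) (m × m) ℂ) (c : ℂ) (ρ : Matrix m m ℂ) :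
    appS S (c • ρ) = c • appS S ρ := by
  ext i j
  simp only [appS, Matrix.of_apply, Matrix.smul_apply, smul_eq_mul, Finset.mul_sum]
  exact Finset.sum_congr rfl fun p _ => by ring

lemma kronS_subS (S₁ S₂ : Matrix (m × m) (m × m) ℂ)
    (S' : Matrix (m' × m') (m' × m') ℂ) :
    kronS (S₁ - S₂) S' = kronS S₁ S' - kronS S₂ S' := by
  ext p q
  simp [kronS, sub_mul]

lemma trDist_appS_eq (T Tφ : Matrix (m × m) (m × m) ℂ) (ρ : Matrix m m ℂ) :
    trDist (appS T ρ) (appS Tφ ρ) = traceNorm (appS (T - Tφ) ρ) / 2 := by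
  rw [trDist, appS_subS]

lemma trDist_nonneg' (a b : Matrix m m ℂ) : 0 ≤ trDist a b :=
  div_nonneg (traceNorm_nonneg _) (by norm_num)

lemma sum_eigen_eq (A : Matrix m m ℂ) :
    ∑ i, (Matrix.posSemidef_conjTranspose_mul_self A).1.eigenvalues i = ((Aᴴ * A).trace).re := by
  have h := congrArg Matrix.trace (hBB A)
  rw [Matrix.conjTranspose_mul, Matrix.trace_mul_comm, ← Matrix.mul_assoc,
    Matrix.mul_assoc A _ _, hUU', Matrix.mul_one, Matrix.trace_mul_comm,
    Matrix.trace_diagonal] at h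
  have h2 := congrArg Complex.re h
  rw [h2, Complex.re_sum]
  exact Finset.sum_congr rfl fun i _ => rfl

lemma trace_conjTranspose_mul_re (A : Matrix m m ℂ) :
    ((Aᴴ * A).trace).re = ∑ p : m × m, Complex.normSq (A p.1 p.2) := by
  rw [Matrix.trace, Complex.re_sum, Fintype.sum_prod_type]
  rw [Finset.sum_comm]
  refine Finset.sum_congr rfl fun i _ => ?_
  rw [Matrix.diag_apply, Matrix.mul_apply, Complex.re_sum]
  refine Finset.sum_congr rfl fun k _ => ?_
  rw [Matrix.conjTranspose_apply]
  have e2 : star (A k i) * A k i = ((Complex.normSq (A k i) : ℝ) : ℂ) := by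
    rw [show star (A k i) = (starRingEnd ℂ) (A k i) from rfl, ← Complex.normSq_eq_conj_mul_self]
  rw [e2]
  simp

lemma traceNorm_le_entrysum (A : Matrix m m ℂ) :
    traceNorm A ≤ (Fintype.card m) * ∑ p : m × m, ‖A p.1 p.2‖ := by
  have hnn : ∀ i, 0 ≤ (Matrix.posSemidef_conjTranspose_mul_self A).1.eigenvalues i :=
    fun i => (Matrix.posSemidef_conjTranspose_mul_self A).eigenvalues_nonneg i
  have hS := sum_eigen_eq A
  set lam := (Matrix.posSemidef_conjTranspose_mul_self A).1.eigenvalues with hl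
  set t := ∑ p : m × m, ‖A p.1 p.2‖ with ht
  have htnn : 0 ≤ t := Finset.sum_nonneg fun p _ => norm_nonneg _
  have hSle : ∑ i, lam i ≤ t ^ 2 := by
    rw [hS, trace_conjTranspose_mul_re]
    have hterm : ∀ p : m × m, Complex.normSq (A p.1 p.2) ≤ ‖A p.1 p.2‖ * t := by
      intro p
      rw [← Complex.sq_norm, pow_two]
      refine mul_le_mul_of_nonneg_left ?_ (norm_nonneg _)
      exact Finset.single_le_sum (f := fun q : m × m => ‖A q.1 q.2‖)
        (fun q _ => norm_nonneg _) (Finset.mem_univ p)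
    calc ∑ p : m × m, Complex.normSq (A p.1 p.2) ≤ ∑ p : m × m, ‖A p.1 p.2‖ * t :=
          Finset.sum_le_sum fun p _ => hterm p
      _ = t * t := by rw [← Finset.sum_mul]
      _ = t ^ 2 := (pow_two t).symm
  have hone : ∀ i, Real.sqrt (lam i) ≤ t := by
    intro i
    have h1 : lam i ≤ t ^ 2 :=
      le_trans (Finset.single_le_sum (fun j _ => hnn j) (Finset.mem_univ i)) hSle
    calc Real.sqrt (lam i) ≤ Real.sqrt (t ^ 2) := Real.sqrt_le_sqrt h1
      _ = t := by rw [Real.sqrt_sq htnn]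
  rw [traceNorm_eq_sum A]
  calc ∑ i, Real.sqrt (lam i) ≤ ∑ _i : m, t := Finset.sum_le_sum fun i _ => hone i
    _ = (Fintype.card m) * t := by rw [Finset.sum_const, Finset.card_univ, nsmul_eq_mul]

lemma density_diag_re_le {ρ : Matrix m m ℂ} (hρ : IsDensityMatrix ρ) (a : m) :
    0 ≤ (ρ a a).re ∧ (ρ a a).re ≤ 1 := by
  have hdiag : ∀ c, 0 ≤ (ρ c c).re := by
    intro c
    have h2 := hρ.1.dotProduct_mulVec_nonneg (Pi.single c 1)
    have e : star (Pi.single c 1 : m → ℂ) ⬝ᵥ ρ *ᵥ Pi.single c 1 = ρ c c := by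
      simp [Matrix.mulVec_single, dotProduct, Pi.star_apply, Pi.single_apply, apply_ite,
        Finset.sum_ite_eq', mul_comm]
    rw [e] at h2
    exact (Complex.nonneg_iff.mp h2).1
  have htr : ∑ c, (ρ c c).re = 1 := by
    have := congrArg Complex.re hρ.2
    rw [Matrix.trace, Complex.re_sum] at this
    simpa using this
  constructor
  · exact hdiag a
  · rw [← htr]
    exact Finset.single_le_sum (fun c _ => hdiag c) (Finset.mem_univ a)

lemma density_entry_le {ρ : Matrix m m ℂ} (hρ : IsDensityMatrix ρ) (a b : m) :
    ‖ρ a b‖ ≤ 1 := by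
  obtain ⟨C, hC⟩ := Matrix.posSemidef_iff_eq_transpose_mul_self.mp hρ.1
  have he : ∀ x y : m, ρ x y = star (fun k => C k x) ⬝ᵥ (fun k => C k y) := by
    intro x y
    rw [hC]
    simp [Matrix.mul_apply, Matrix.conjTranspose_apply, dotProduct]
  have hcs := cs_dot (fun k => C k a) (fun k => C k b)
  rw [← he a b, ← he a a, ← he b b] at hcs
  refine hcs.trans ?_
  have h1 := density_diag_re_le hρ a
  have h2 := density_diag_re_le hρ b
  calc Real.sqrt ((ρ a a).re) * Real.sqrt ((ρ b b).re) ≤ 1 * 1 := by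
        refine mul_le_mul ?_ ?_ (Real.sqrt_nonneg _) (by norm_num)
        · exact Real.sqrt_le_one.mpr h1.2
        · exact Real.sqrt_le_one.mpr h2.2
    _ = 1 := by norm_num

lemma trDist_le_bound (T Tφ : Matrix (m × m) (m × m) ℂ) {ρ : Matrix m m ℂ}
    (hρ : IsDensityMatrix ρ) :
    trDist (appS T ρ) (appS Tφ ρ) ≤
      (Fintype.card m) * ∑ p : m × m, ∑ r : m × m, ‖(T - Tφ) p r‖ := by
  rw [trDist_appS_eq]
  have h1 := traceNorm_le_entrysum (appS (T - Tφ) ρ)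
  have h2 : ∀ p : m × m, ‖(appS (T - Tφ) ρ) p.1 p.2‖
      ≤ ∑ r : m × m, ‖(T - Tφ) p r‖ := by
    intro p
    rw [show (appS (T - Tφ) ρ) p.1 p.2 = ∑ r : m × m, (T - Tφ) (p.1, p.2) r * ρ r.1 r.2 from rfl]
    refine (norm_sum_le _ _).trans ?_
    refine Finset.sum_le_sum fun r _ => ?_
    rw [norm_mul]
    calc ‖(T - Tφ) (p.1, p.2) r‖ * ‖ρ r.1 r.2‖
        ≤ ‖(T - Tφ) (p.1, p.2) r‖ * 1 :=
          mul_le_mul_of_nonneg_left (density_entry_le hρ r.1 r.2) (norm_nonneg _)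
      _ = ‖(T - Tφ) p r‖ := by rw [mul_one]
  have h3 : traceNorm (appS (T - Tφ) ρ) ≤
      (Fintype.card m) * ∑ p : m × m, ∑ r : m × m, ‖(T - Tφ) p r‖ := by
    refine h1.trans ?_
    refine mul_le_mul_of_nonneg_left (Finset.sum_le_sum fun p _ => h2 p) (by positivity)
  nlinarith [traceNorm_nonneg (appS (T - Tφ) ρ)]

lemma le_etaTR (T Tφ : Matrix (m × m) (m × m) ℂ) {ρ : Matrix m m ℂ}
    (hρ : IsDensityMatrix ρ) :
    trDist (appS T ρ) (appS Tφ ρ) ≤ etaTR T Tφ := by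
  have hbdd : BddAbove (Set.range fun σ : {σ : Matrix m m ℂ // IsDensityMatrix σ} =>
      trDist (appS T σ.1) (appS Tφ σ.1)) := by
    refine ⟨(Fintype.card m) * ∑ p : m × m, ∑ r : m × m, ‖(T - Tφ) p r‖, ?_⟩
    rintro x ⟨σ, rfl⟩
    exact trDist_le_bound T Tφ σ.2
  exact le_ciSup hbdd ⟨ρ, hρ⟩

lemma etaTR_nonneg (T Tφ : Matrix (m × m) (m × m) ℂ) : 0 ≤ etaTR T Tφ :=
  Real.iSup_nonneg fun σ => trDist_nonneg' _ _

/-- Rank-one matrix `w wᴴ`. -/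
def vecMat (w : m → ℂ) : Matrix m m ℂ := Matrix.of fun a b => w a * star (w b)

lemma vecMat_posSemidef (w : m → ℂ) : (vecMat w).PosSemidef := by
  refine Matrix.PosSemidef.of_dotProduct_mulVec_nonneg ?_ ?_
  · ext a b
    simp only [Matrix.conjTranspose_apply, vecMat, Matrix.of_apply, star_mul', star_star]
    ring
  · intro x
    have e : star x ⬝ᵥ (vecMat w) *ᵥ x = star (star w ⬝ᵥ x) * (star w ⬝ᵥ x) := by
      simp only [dotProduct, Matrix.mulVec, vecMat, Matrix.of_apply, Pi.star_apply,
        star_sum, star_mul', star_star, Finset.mul_sum, Finset.sum_mul]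
      rw [Finset.sum_comm]
      refine Finset.sum_congr rfl fun a _ => Finset.sum_congr rfl fun b _ => by ring
    rw [e]
    exact star_mul_self_nonneg _

lemma vecMat_trace (w : m → ℂ) :
    (vecMat w).trace = ((∑ a, Complex.normSq (w a) : ℝ) : ℂ) := by
  rw [Matrix.trace]
  push_cast
  refine Finset.sum_congr rfl fun a _ => ?_
  rw [Matrix.diag_apply, vecMat, Matrix.of_apply,
    show star (w a) = (starRingEnd ℂ) (w a) from rfl, mul_comm, ← Complex.normSq_eq_conj_mul_self]

lemma sum_twopoint {α : Type*} [AddCommMonoid α] {i j : m} (hij : i ≠ j) (f g : m → α) :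
    ∑ k, (if k = i then f k else if k = j then g k else 0) = f i + g j := by
  have h : ∀ k, (if k = i then f k else if k = j then g k else 0)
      = (if k = i then f k else 0) + (if k = j then g k else 0) := by
    intro k
    by_cases h1 : k = i
    · subst h1; simp [hij]
    · by_cases h2 : k = j <;> simp [h1, h2, Ne.symm hij]
  rw [Finset.sum_congr rfl fun k _ => h k, Finset.sum_add_distrib,
    Finset.sum_ite_eq', Finset.sum_ite_eq']
  simp

/-- Two-point supported vector `e_i + ω̄ e_j`. -/
def wE (i j : m) (ω : ℂ) : m → ℂ := fun a => if a = i then 1 else if a = j then star ω else 0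

lemma wE_density {i j : m} (hij : i ≠ j) {ω : ℂ} (hω : ‖ω‖ = 1) :
    IsDensityMatrix ((2⁻¹ : ℂ) • vecMat (wE i j ω)) := by
  constructor
  · have := posSemidef_smul (vecMat_posSemidef (wE i j ω)) 2⁻¹ (by norm_num)
    have e : (((2⁻¹ : ℝ) : ℂ)) = (2⁻¹ : ℂ) := by push_cast; rfl
    rwa [e] at this
  · rw [Matrix.trace_smul, vecMat_trace]
    have e : ∑ a, Complex.normSq (wE i j ω a) = 2 := by
      have h : ∀ a, Complex.normSq (wE i j ω a)
          = (if a = i then (fun _ => (1:ℝ)) a else if a = j then (fun _ => (1:ℝ)) a else 0) := by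
        intro a
        by_cases h1 : a = i
        · simp [wE, h1]
        · by_cases h2 : a = j
          · subst h2
            have hji : ¬ (a = i) := h1
            simp only [wE, if_neg hji, if_pos rfl, ite_true, ite_false]
            rw [show (star ω) = (starRingEnd ℂ) ω from rfl, Complex.normSq_conj,
              ← Complex.sq_norm, hω]
            norm_num
          · simp [wE, h1, h2]
      rw [Finset.sum_congr rfl fun a _ => h a, sum_twopoint hij]
      norm_num
    rw [e]
    norm_num

lemma std_decomp {i j : m} (hij : i ≠ j) :
    (4 : ℂ) • Matrix.single i j (1 : ℂ) =
      vecMat (wE i j 1) - vecMat (wE i j (-1))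
        + Complex.I • vecMat (wE i j (-Complex.I)) - Complex.I • vecMat (wE i j Complex.I) := by
  ext a b
  simp only [Matrix.smul_apply, Matrix.sub_apply, Matrix.add_apply, vecMat, Matrix.of_apply,
    wE, Matrix.single, smul_eq_mul, apply_ite (star : ℂ → ℂ), star_one, star_neg,
    star_star, Complex.conj_I, star_zero]
  by_cases ha : a = i <;> by_cases ha' : a = j <;> by_cases hb : b = i <;> by_cases hb' : b = j
  all_goals try exact absurd (ha.symm.trans ha') hij
  all_goals try exact absurd (hb.symm.trans hb') hij
  all_goals subst_vars
  all_goals simp_all [hij, Ne.symm hij, eq_comm]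
  all_goals try ring_nf
  all_goals try norm_num [Complex.I_sq, Complex.I_mul_I]

lemma traceNorm_neg (A : Matrix m m ℂ) : traceNorm (-A) = traceNorm A := by
  rw [show -A = ((-1 : ℂ)) • A by simp, traceNorm_smul]
  simp

lemma traceNorm_sub_le (A B : Matrix m m ℂ) :
    traceNorm (A - B) ≤ traceNorm A + traceNorm B := by
  rw [sub_eq_add_neg]
  exact (traceNorm_triangle A (-B)).trans (by rw [traceNorm_neg])

/-- Block `X_{ij}(b,e) = ρ((i,b),(j,e))` of a composite matrix. -/
def Xblk (ρ : Matrix (m × m') (m × m') ℂ) (i j : m) : Matrix m' m' ℂ :=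
  Matrix.of fun b e => ρ (i, b) (j, e)

lemma Xblk_ii_posSemidef {ρ : Matrix (m × m') (m × m') ℂ} (hρ : ρ.PosSemidef) (i : m) :
    (Xblk ρ i i).PosSemidef :=
  hρ.submatrix (fun b : m' => (i, b))

lemma sum_Xblk_trace (ρ : Matrix (m × m') (m × m') ℂ) :
    ∑ i, (Xblk ρ i i).trace = ρ.trace := by
  rw [Matrix.trace, Fintype.sum_prod_type]
  exact Finset.sum_congr rfl fun i _ => rfl

/-- Compression matrix implementing `e_b ↦ u ⊗ e_b`. -/
def compB (u : m → ℂ) : Matrix (m × m') m' ℂ :=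
  Matrix.of fun p e => u p.1 * (if p.2 = e then 1 else 0)

lemma comp_left (ρ : Matrix (m × m') (m × m') ℂ) (u : m → ℂ) (b : m') (q : m × m') :
    ((compB (m' := m') u).conjTranspose * ρ) b q = ∑ k, star (u k) * ρ (k, b) q := by
  rw [Matrix.mul_apply, Fintype.sum_prod_type]
  refine Finset.sum_congr rfl fun k _ => ?_
  have h : ∀ y, (compB (m' := m') u).conjTranspose b (k, y) * ρ (k, y) q
      = if y = b then star (u k) * ρ (k, y) q else 0 := by
    intro y
    by_cases hy : y = b <;> simp [compB, Matrix.conjTranspose_apply, hy]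
  rw [Finset.sum_congr rfl fun y _ => h y, Finset.sum_ite_eq' Finset.univ b]
  simp

lemma comp_entry (ρ : Matrix (m × m') (m × m') ℂ) (u : m → ℂ) (b e : m') :
    ((compB (m' := m') u).conjTranspose * ρ * compB (m' := m') u) b e
      = ∑ k', (∑ k, star (u k) * ρ (k, b) (k', e)) * u k' := by
  rw [Matrix.mul_apply, Fintype.sum_prod_type]
  refine Finset.sum_congr rfl fun k' _ => ?_
  have h : ∀ w, ((compB (m' := m') u).conjTranspose * ρ) b (k', w) * compB (m' := m') u (k', w) e
      = if w = e then ((compB (m' := m') u).conjTranspose * ρ) b (k', w) * u k' else 0 := by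
    intro w
    by_cases hw : w = e <;> simp [compB, hw]
  rw [Finset.sum_congr rfl fun w _ => h w, Finset.sum_ite_eq' Finset.univ e]
  rw [comp_left]
  simp

/-- Two-point supported vector `e_i + ω e_j`. -/
def uv (i j : m) (ω : ℂ) : m → ℂ := fun k => if k = i then 1 else if k = j then ω else 0

/-- The compressed PSD block combination. -/
def Mom (ρ : Matrix (m × m') (m × m') ℂ) (i j : m) (ω : ℂ) : Matrix m' m' ℂ :=
  Xblk ρ i i + Xblk ρ j j + ω • Xblk ρ i j + star ω • Xblk ρ j i

lemma Mom_eq (ρ : Matrix (m × m') (m × m') ℂ) {i j : m} (hij : i ≠ j) {ω : ℂ}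
    (hω : star ω * ω = 1) :
    (compB (m' := m') (uv i j ω))ᴴ * ρ * compB (m' := m') (uv i j ω) = Mom ρ i j ω := by
  ext b e
  rw [comp_entry]
  have hin : ∀ k', (∑ k, star (uv i j ω k) * ρ (k, b) (k', e))
      = ρ (i, b) (k', e) + star ω * ρ (j, b) (k', e) := by
    intro k'
    have h : ∀ k, star (uv i j ω k) * ρ (k, b) (k', e)
        = if k = i then (fun t => ρ (t, b) (k', e)) k
          else if k = j then (fun t => star ω * ρ (t, b) (k', e)) k else 0 := by
      intro k
      by_cases h1 : k = i <;> by_cases h2 : k = j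
      · exact absurd (h1.symm.trans h2) hij
      all_goals simp [uv, h1, h2, hij, Ne.symm hij]
    rw [Finset.sum_congr rfl fun k _ => h k, sum_twopoint hij]
  rw [Finset.sum_congr rfl fun k' _ => congrArg (· * uv i j ω k') (hin k')]
  have h2 : ∀ k', (ρ (i, b) (k', e) + star ω * ρ (j, b) (k', e)) * uv i j ω k'
      = if k' = i then (fun t => ρ (i, b) (t, e) + star ω * ρ (j, b) (t, e)) k'
        else if k' = j then (fun t => (ρ (i, b) (t, e) + star ω * ρ (j, b) (t, e)) * ω) k'
        else 0 := by
    intro k'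
    by_cases h1 : k' = i <;> by_cases h2 : k' = j
    · exact absurd (h1.symm.trans h2) hij
    all_goals simp [uv, h1, h2, hij, Ne.symm hij]
  rw [Finset.sum_congr rfl fun k' _ => h2 k', sum_twopoint hij]
  simp only [Mom, Matrix.add_apply, Matrix.smul_apply, Xblk, Matrix.of_apply, smul_eq_mul]
  have : star ω * ρ ((j, b)) ((j, e)) * ω = (star ω * ω) * ρ ((j, b)) ((j, e)) := by ring
  rw [add_mul, this, hω, one_mul]
  ring

lemma Mom_posSemidef {ρ : Matrix (m × m') (m × m') ℂ} (hρ : ρ.PosSemidef) {i j : m}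
    (hij : i ≠ j) {ω : ℂ} (hω : star ω * ω = 1) : (Mom ρ i j ω).PosSemidef := by
  rw [← Mom_eq ρ hij hω]
  exact hρ.conjTranspose_mul_mul_same _

lemma Xblk_decomp (ρ : Matrix (m × m') (m × m') ℂ) (i j : m) :
    (4 : ℂ) • Xblk ρ i j = Mom ρ i j 1 - Mom ρ i j (-1)
      + Complex.I • Mom ρ i j (-Complex.I) - Complex.I • Mom ρ i j Complex.I := by
  ext b e
  simp only [Mom, Matrix.smul_apply, Matrix.sub_apply, Matrix.add_apply, smul_eq_mul,
    Complex.star_def, star_one, star_neg, _root_.map_one, _root_.map_neg, Complex.conj_I, neg_neg]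
  linear_combination (2 * Xblk ρ i j b e - 2 * Xblk ρ j i b e) * Complex.I_sq

lemma Mom_traces (ρ : Matrix (m × m') (m × m') ℂ) (i j : m) :
    (Mom ρ i j 1).trace + (Mom ρ i j (-1)).trace + (Mom ρ i j (-Complex.I)).trace
      + (Mom ρ i j Complex.I).trace = 4 * ((Xblk ρ i i).trace + (Xblk ρ j j).trace) := by
  simp only [Mom, Matrix.trace_add, Matrix.trace_smul, star_one, star_neg, Complex.conj_I,
    neg_neg, smul_eq_mul]
  ring

lemma traceNorm_Xblk_le {ρ : Matrix (m × m') (m × m') ℂ} (hρ : ρ.PosSemidef) {i j : m}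
    (hij : i ≠ j) :
    traceNorm (Xblk ρ i j) ≤ ((Xblk ρ i i).trace + (Xblk ρ j j).trace).re := by
  have h4 : (4 : ℝ) * traceNorm (Xblk ρ i j) = traceNorm ((4 : ℂ) • Xblk ρ i j) := by
    rw [traceNorm_smul]
    norm_num
  have hωI : star Complex.I * Complex.I = 1 := by
    simp [Complex.conj_I, Complex.I_mul_I]
  have hωnI : star (-Complex.I) * (-Complex.I) = 1 := by
    simp [Complex.conj_I, Complex.I_mul_I]
  have hω1 : star (1 : ℂ) * 1 = 1 := by simp
  have hωn1 : star (-1 : ℂ) * (-1) = 1 := by simp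
  have hM1 := Mom_posSemidef hρ hij hω1
  have hM2 := Mom_posSemidef hρ hij hωn1
  have hM3 := Mom_posSemidef hρ hij hωnI
  have hM4 := Mom_posSemidef hρ hij hωI
  have hstep : traceNorm ((4 : ℂ) • Xblk ρ i j)
      ≤ traceNorm (Mom ρ i j 1) + traceNorm (Mom ρ i j (-1))
        + traceNorm (Mom ρ i j (-Complex.I)) + traceNorm (Mom ρ i j Complex.I) := by
    rw [Xblk_decomp]
    have t1 := traceNorm_sub_le
      (Mom ρ i j 1 - Mom ρ i j (-1) + Complex.I • Mom ρ i j (-Complex.I))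
      (Complex.I • Mom ρ i j Complex.I)
    have t2 := traceNorm_triangle (Mom ρ i j 1 - Mom ρ i j (-1))
      (Complex.I • Mom ρ i j (-Complex.I))
    have t3 := traceNorm_sub_le (Mom ρ i j 1) (Mom ρ i j (-1))
    have tI1 : traceNorm (Complex.I • Mom ρ i j (-Complex.I))
        = traceNorm (Mom ρ i j (-Complex.I)) := by rw [traceNorm_smul]; simp
    have tI2 : traceNorm (Complex.I • Mom ρ i j Complex.I)
        = traceNorm (Mom ρ i j Complex.I) := by rw [traceNorm_smul]; simp
    rw [tI1] at t2
    rw [tI2] at t1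
    linarith
  have htn : ∀ (M : Matrix m' m' ℂ), M.PosSemidef → traceNorm M = M.trace.re :=
    fun M hM => traceNorm_psd hM
  rw [htn _ hM1, htn _ hM2, htn _ hM3, htn _ hM4] at hstep
  have hre : (Mom ρ i j 1).trace.re + (Mom ρ i j (-1)).trace.re
      + (Mom ρ i j (-Complex.I)).trace.re + (Mom ρ i j Complex.I).trace.re
      = 4 * ((Xblk ρ i i).trace + (Xblk ρ j j).trace).re := by
    have := congrArg Complex.re (Mom_traces ρ i j)
    simpa using this
  rw [hre] at hstep
  rw [← h4] at hstep
  linarith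

lemma appS_std (Δ : Matrix (m × m) (m × m) ℂ) (p : m × m) (a c : m) :
    appS Δ (Matrix.single p.1 p.2 (1 : ℂ)) a c = Δ (a, c) p := by
  rw [show appS Δ (Matrix.single p.1 p.2 (1:ℂ)) a c
    = ∑ r : m × m, Δ (a,c) r * Matrix.single p.1 p.2 (1:ℂ) r.1 r.2 from rfl]
  have h : ∀ r : m × m, Δ (a,c) r * Matrix.single p.1 p.2 (1:ℂ) r.1 r.2
      = if r = p then Δ (a,c) r else 0 := by
    intro r
    by_cases hr : r = p
    · subst hr; simp [Matrix.single]
    · have hne : ¬ (p.1 = r.1 ∧ p.2 = r.2) := by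
        intro hcon
        exact hr (Prod.ext hcon.1.symm hcon.2.symm)
      simp [Matrix.single, hne, hr]
  rw [Finset.sum_congr rfl fun r _ => h r, Finset.sum_ite_eq' Finset.univ p]
  simp

lemma stdBasis_diag_density (i : m) : IsDensityMatrix (Matrix.single i i (1 : ℂ)) := by
  constructor
  · have h : Matrix.single i i (1:ℂ) = vecMat (fun a => if a = i then 1 else 0) := by
      ext a b
      by_cases ha : a = i <;> by_cases hb : b = i
      · simp [vecMat, Matrix.single, ha, hb]
      · have hib : ¬ i = b := fun h => hb h.symm
        simp [vecMat, Matrix.single, ha, hb, hib]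
      · have hia : ¬ i = a := fun h => ha h.symm
        simp [vecMat, Matrix.single, ha, hb, hia]
      · have hia : ¬ i = a := fun h => ha h.symm
        simp [vecMat, Matrix.single, ha, hb, hia]
    rw [h]
    exact vecMat_posSemidef _
  · rw [Matrix.trace]
    have h : ∀ a, (Matrix.single i i (1:ℂ)).diag a = if a = i then 1 else 0 := by
      intro a
      by_cases ha : a = i
      · simp [Matrix.single, Matrix.diag, ha]
      · have hia : ¬ i = a := fun h => ha h.symm
        simp [Matrix.single, Matrix.diag, ha, hia]
    rw [Finset.sum_congr rfl fun a _ => h a, Finset.sum_ite_eq' Finset.univ i]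
    simp

lemma traceNorm_appS_density_le (T Tφ : Matrix (m × m) (m × m) ℂ) {σ : Matrix m m ℂ}
    (hσ : IsDensityMatrix σ) :
    traceNorm (appS (T - Tφ) σ) ≤ 2 * etaTR T Tφ := by
  have h := le_etaTR T Tφ hσ
  rw [trDist_appS_eq] at h
  linarith

lemma traceNorm_appS_std_le (T Tφ : Matrix (m × m) (m × m) ℂ) (i j : m) :
    traceNorm (appS (T - Tφ) (Matrix.single i j (1 : ℂ))) ≤ 4 * etaTR T Tφ := by
  have hη := etaTR_nonneg T Tφ
  by_cases hij : i = j
  · subst hij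
    have h := traceNorm_appS_density_le T Tφ (stdBasis_diag_density i)
    linarith
  · have hd : ∀ ω : ℂ, ‖ω‖ = 1 →
        traceNorm (appS (T - Tφ) (vecMat (wE i j ω))) ≤ 4 * etaTR T Tφ := by
      intro ω hω
      have hden := wE_density hij hω
      have h2 : vecMat (wE i j ω) = (2 : ℂ) • ((2⁻¹ : ℂ) • vecMat (wE i j ω)) := by
        rw [smul_smul]; norm_num
      rw [h2, appS_smulM, traceNorm_smul]
      have h3 := traceNorm_appS_density_le T Tφ hden
      have : ‖(2 : ℂ)‖ = 2 := by norm_num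
      rw [this]
      linarith
    have hdec : appS (T - Tφ) ((4 : ℂ) • Matrix.single i j (1:ℂ))
        = appS (T - Tφ) (vecMat (wE i j 1)) - appS (T - Tφ) (vecMat (wE i j (-1)))
          + Complex.I • appS (T - Tφ) (vecMat (wE i j (-Complex.I)))
          - Complex.I • appS (T - Tφ) (vecMat (wE i j Complex.I)) := by
      rw [std_decomp hij, appS_subM, appS_addM, appS_subM, appS_smulM, appS_smulM]
    have h4 : (4:ℝ) * traceNorm (appS (T - Tφ) (Matrix.single i j (1:ℂ)))
        = traceNorm (appS (T - Tφ) ((4 : ℂ) • Matrix.single i j (1:ℂ))) := by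
      rw [appS_smulM, traceNorm_smul]
      norm_num
    have t1 := traceNorm_sub_le
      (appS (T - Tφ) (vecMat (wE i j 1)) - appS (T - Tφ) (vecMat (wE i j (-1)))
        + Complex.I • appS (T - Tφ) (vecMat (wE i j (-Complex.I))))
      (Complex.I • appS (T - Tφ) (vecMat (wE i j Complex.I)))
    have t2 := traceNorm_triangle
      (appS (T - Tφ) (vecMat (wE i j 1)) - appS (T - Tφ) (vecMat (wE i j (-1))))
      (Complex.I • appS (T - Tφ) (vecMat (wE i j (-Complex.I))))
    have t3 := traceNorm_sub_le (appS (T - Tφ) (vecMat (wE i j 1)))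
      (appS (T - Tφ) (vecMat (wE i j (-1))))
    have tI : ∀ X : Matrix m m ℂ, traceNorm (Complex.I • X) = traceNorm X := by
      intro X
      rw [traceNorm_smul]
      simp
    rw [tI] at t1 t2
    have b1 := hd 1 (by norm_num)
    have b2 := hd (-1) (by norm_num)
    have b3 := hd (-Complex.I) (by simp)
    have b4 := hd Complex.I (by simp)
    rw [← hdec] at t1
    rw [← h4] at t1
    linarith

open Kronecker in
lemma appS_kron_decomp (Δ : Matrix (m × m) (m × m) ℂ) (ρ : Matrix (m × m') (m × m') ℂ) :
    appS (kronS Δ (1 : Matrix (m' × m') (m' × m') ℂ)) ρ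
      = ∑ p : m × m, (appS Δ (Matrix.single p.1 p.2 (1:ℂ))) ⊗ₖ (Xblk ρ p.1 p.2) := by
  ext ⟨a, b⟩ ⟨c, e⟩
  have hL : appS (kronS Δ (1 : Matrix (m' × m') (m' × m') ℂ)) ρ (a,b) (c,e)
      = ∑ x : m × m, Δ (a,c) x * ρ ((x.1, b)) ((x.2, e)) := by
    rw [show appS (kronS Δ (1 : Matrix (m' × m') (m' × m') ℂ)) ρ (a,b) (c,e)
      = ∑ q : (m × m') × (m × m'),
          kronS Δ (1 : Matrix (m' × m') (m' × m') ℂ) ((a,b),(c,e)) q * ρ q.1 q.2 from rfl]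
    rw [← Equiv.sum_comp (Equiv.prodProdProdComm m m m' m')
      (fun q => kronS Δ (1 : Matrix (m' × m') (m' × m') ℂ) ((a,b),(c,e)) q * ρ q.1 q.2)]
    rw [Fintype.sum_prod_type]
    refine Finset.sum_congr rfl fun x _ => ?_
    have h : ∀ v : m' × m',
        (fun q => kronS Δ (1 : Matrix (m' × m') (m' × m') ℂ) ((a,b),(c,e)) q * ρ q.1 q.2)
          ((Equiv.prodProdProdComm m m m' m') (x, v))
        = if (b, e) = v then Δ (a,c) x * ρ ((x.1, v.1)) ((x.2, v.2)) else 0 := by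
      intro v
      show Δ (a, c) (x.1, x.2) * (1 : Matrix (m' × m') (m' × m') ℂ) (b, e) (v.1, v.2)
          * ρ ((x.1, v.1)) ((x.2, v.2)) = _
      rw [Matrix.one_apply]
      by_cases hv : (b, e) = v
      · rw [if_pos (show ((b,e) : m' × m') = (v.1, v.2) from hv), if_pos hv]
        ring
      · rw [if_neg (show ¬ ((b,e) : m' × m') = (v.1, v.2) from hv), if_neg hv]
        ring
    rw [Finset.sum_congr rfl fun v _ => h v, Finset.sum_ite_eq Finset.univ ((b,e) : m' × m')]
    simp
  have hR : (∑ p : m × m,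
      (appS Δ (Matrix.single p.1 p.2 (1:ℂ))) ⊗ₖ (Xblk ρ p.1 p.2)) (a,b) (c,e)
      = ∑ x : m × m, Δ (a,c) x * ρ ((x.1, b)) ((x.2, e)) := by
    rw [Matrix.sum_apply]
    refine Finset.sum_congr rfl fun x _ => ?_
    rw [Matrix.kroneckerMap_apply, appS_std]
    rfl
  rw [hL, hR]

end Problem

end ContractionAux

/-- **Stabilization of the contraction under tensoring with the identity.** -/
theorem contraction_tensor_identity {d d' : ℕ}
    (T Tφ : Matrix (Fin d × Fin d) (Fin d × Fin d) ℂ)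
    (hT : IsQChannelM T) (hTφ : IsPeriphProjM T Tφ) :
    etaTR (kronS T (1 : Matrix (Fin d' × Fin d') (Fin d' × Fin d') ℂ)) (kronS Tφ 1) ≤
      4 * d * etaTR T Tφ := by
  classical
  open ContractionAux Kronecker in
  refine Real.iSup_le ?_ ?_
  · rintro ⟨ρ, hρ⟩
    have hη := ContractionAux.etaTR_nonneg T Tφ
    have h0 : trDist (appS (kronS T (1 : Matrix (Fin d' × Fin d') (Fin d' × Fin d') ℂ)) ρ)
        (appS (kronS Tφ 1) ρ) = traceNorm (appS (kronS (T - Tφ) 1) ρ) / 2 := by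
      rw [trDist, ← ContractionAux.appS_subS, ← ContractionAux.kronS_subS]
    rw [h0, ContractionAux.appS_kron_decomp]
    set t : Fin d → ℝ := fun i => (ContractionAux.Xblk ρ i i).trace.re with ht
    have htnn : ∀ i, 0 ≤ t i := by
      intro i
      have h := ContractionAux.psd_trace_nonneg (ContractionAux.Xblk_ii_posSemidef hρ.1 i)
      exact (Complex.nonneg_iff.mp h.1).1
    have htsum : ∑ i, t i = 1 := by
      have h := congrArg Complex.re (ContractionAux.sum_Xblk_trace ρ)
      rw [hρ.2, Complex.re_sum] at h
      simpa using h
    have hX : ∀ p : Fin d × Fin d,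
        traceNorm (ContractionAux.Xblk ρ p.1 p.2) ≤ t p.1 + t p.2 := by
      rintro ⟨i, j⟩
      by_cases hij : i = j
      · subst hij
        rw [ContractionAux.traceNorm_psd (ContractionAux.Xblk_ii_posSemidef hρ.1 i)]
        have : t i ≤ t i + t i := le_add_of_nonneg_left (htnn i)
        exact this
      · have h := ContractionAux.traceNorm_Xblk_le hρ.1 hij
        rwa [Complex.add_re] at h
    have hE : ∀ p : Fin d × Fin d,
        traceNorm (appS (T - Tφ) (Matrix.single p.1 p.2 (1:ℂ))) ≤ 4 * etaTR T Tφ :=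
      fun p => ContractionAux.traceNorm_appS_std_le T Tφ p.1 p.2
    have hterm : ∀ p : Fin d × Fin d,
        traceNorm ((appS (T - Tφ) (Matrix.single p.1 p.2 (1:ℂ))) ⊗ₖ
          (ContractionAux.Xblk ρ p.1 p.2))
        ≤ (4 * etaTR T Tφ) * (t p.1 + t p.2) := by
      intro p
      rw [ContractionAux.traceNorm_kron]
      exact mul_le_mul (hE p) (hX p) (ContractionAux.traceNorm_nonneg _)
        (by positivity)
    have hsum := ContractionAux.traceNorm_sum_le Finset.univ
      (fun p : Fin d × Fin d => (appS (T - Tφ) (Matrix.single p.1 p.2 (1:ℂ))) ⊗ₖ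
        (ContractionAux.Xblk ρ p.1 p.2))
    have hbound : ∑ p : Fin d × Fin d,
        traceNorm ((appS (T - Tφ) (Matrix.single p.1 p.2 (1:ℂ))) ⊗ₖ
          (ContractionAux.Xblk ρ p.1 p.2))
        ≤ (4 * etaTR T Tφ) * (2 * d) := by
      calc ∑ p : Fin d × Fin d, traceNorm _ ≤ ∑ p : Fin d × Fin d, (4 * etaTR T Tφ) * (t p.1 + t p.2) :=
            Finset.sum_le_sum fun p _ => hterm p
        _ = (4 * etaTR T Tφ) * ∑ p : Fin d × Fin d, (t p.1 + t p.2) := by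
            rw [Finset.mul_sum]
        _ = (4 * etaTR T Tφ) * (2 * d) := by
            congr 1
            rw [Fintype.sum_prod_type]
            have : ∀ i : Fin d, ∑ j : Fin d, (t i + t j) = d * t i + 1 := by
              intro i
              rw [Finset.sum_add_distrib, htsum, Finset.sum_const, Finset.card_univ,
                Fintype.card_fin, nsmul_eq_mul]
            rw [Finset.sum_congr rfl fun i _ => this i, Finset.sum_add_distrib,
              ← Finset.mul_sum, htsum, Finset.sum_const, Finset.card_univ, Fintype.card_fin,
              nsmul_eq_mul]
            ring
    have hfinal := hsum.trans hbound
    calc traceNorm (∑ p : Fin d × Fin d,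
          (appS (T - Tφ) (Matrix.single p.1 p.2 (1:ℂ))) ⊗ₖ
            (ContractionAux.Xblk ρ p.1 p.2)) / 2
        ≤ ((4 * etaTR T Tφ) * (2 * d)) / 2 := by linarith
      _ = 4 * d * etaTR T Tφ := by ring
  · have hη := ContractionAux.etaTR_nonneg T Tφ
    positivity
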